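/- For f ∈ C(𝕋) a continuous function on the unit circle, the Toeplitz operator T_f = P M_f P on l²(ℤ≥0) (viewed inside l²(ℤ)) satisfies: T_{fg} − T_f T_g is compact for all f, g ∈ C(𝕋). In particular, if f is nowhere vanishing then T_f is Fredholm. -/

import Mathlib

open Metric

/-- The `j`-th Fourier coefficient of a function `f` on the unit circle. -/
noncomputable def circleFourierCoeff (f : ℂ → ℂ) (j : ℤ) : ℂ :=
  (1 / (2 * Real.pi)) * ∫ θ in (0 : ℝ)..(2 * Real.pi),
    f (Complex.exp (θ * Complex.I)) * Complex.exp (-((j : ℂ) * (θ : ℂ)) * Complex.I)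

namespace ToeplitzProof

open MeasureTheory Complex
open scoped ENNReal NNReal

noncomputable section

instance : Fact (0 < 2 * Real.pi) := ⟨Real.two_pi_pos⟩

abbrev Circ := AddCircle (2 * Real.pi)

abbrev μT : Measure Circ := AddCircle.haarAddCircle

abbrev Hsp := Lp ℂ 2 μT

abbrev ell := lp (fun _ : ℤ => ℂ) 2

lemma memℒp_top_cm (h : C(Circ, ℂ)) : MemLp (⇑h) ⊤ μT :=
  memLp_top_of_bound h.continuous.aestronglyMeasurable ‖h‖
    (Filter.Eventually.of_forall fun x => h.norm_coe_le_norm x)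

lemma memℒp_mul (h : C(Circ, ℂ)) (F : Hsp) : MemLp (fun x => h x * F x) 2 μT := by
  have h1 := MemLp.smul (r := 2) (memℒp_top_cm h) (Lp.memLp F)
  have : (⇑F • ⇑h : Circ → ℂ) = fun x => h x * F x := by
    funext x; simp [Pi.smul_apply', mul_comm]
  rwa [this] at h1

def mulLin (h : C(Circ, ℂ)) : Hsp →ₗ[ℂ] Hsp where
  toFun F := (memℒp_mul h F).toLp _
  map_add' F G := by
    apply Lp.ext
    filter_upwards [MemLp.coeFn_toLp (memℒp_mul h (F + G)),
      MemLp.coeFn_toLp (memℒp_mul h F), MemLp.coeFn_toLp (memℒp_mul h G),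
      Lp.coeFn_add F G,
      Lp.coeFn_add ((memℒp_mul h F).toLp _) ((memℒp_mul h G).toLp _)] with x h1 h2 h3 h4 h5
    rw [h1, h5, Pi.add_apply, h2, h3, h4, Pi.add_apply]
    ring
  map_smul' c F := by
    apply Lp.ext
    filter_upwards [MemLp.coeFn_toLp (memℒp_mul h (c • F)),
      MemLp.coeFn_toLp (memℒp_mul h F),
      Lp.coeFn_smul c F,
      Lp.coeFn_smul c ((memℒp_mul h F).toLp _)] with x h1 h2 h3 h4
    rw [RingHom.id_apply, h1, h4, Pi.smul_apply, h2, h3, Pi.smul_apply]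
    simp [smul_eq_mul]; ring

lemma mulLin_norm_le (h : C(Circ, ℂ)) (F : Hsp) : ‖mulLin h F‖ ≤ ‖h‖ * ‖F‖ := by
  have h0 : mulLin h F = (memℒp_mul h F).toLp _ := rfl
  rw [h0, Lp.norm_toLp]
  have h1 : eLpNorm (fun x => h x * F x) 2 μT ≤ eLpNorm (⇑h) ⊤ μT * eLpNorm (⇑F) 2 μT := by
    have := eLpNorm_smul_le_eLpNorm_top_mul_eLpNorm (μ := μT) 2 (Lp.aestronglyMeasurable F) ⇑h
    have h2 : (⇑h • ⇑F : Circ → ℂ) = fun x => h x * F x := by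
      funext x; simp [Pi.smul_apply']
    rwa [h2] at this
  have h3 : eLpNorm (⇑h) ⊤ μT ≤ ENNReal.ofReal ‖h‖ := by
    have := eLpNorm_le_of_ae_bound (μ := μT) (p := (⊤ : ℝ≥0∞))
      (Filter.Eventually.of_forall fun x => h.norm_coe_le_norm x)
    simpa using this
  have h4 : eLpNorm (fun x => h x * F x) 2 μT ≤ ENNReal.ofReal ‖h‖ * eLpNorm (⇑F) 2 μT :=
    h1.trans (mul_le_mul_left h3 _)
  have h5 : ENNReal.ofReal ‖h‖ * eLpNorm (⇑F) 2 μT ≠ ⊤ :=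
    ENNReal.mul_ne_top ENNReal.ofReal_ne_top (Lp.memLp F).2.ne
  calc (eLpNorm (fun x => h x * F x) 2 μT).toReal
      ≤ (ENNReal.ofReal ‖h‖ * eLpNorm (⇑F) 2 μT).toReal := ENNReal.toReal_mono h5 h4
    _ = ‖h‖ * ‖F‖ := by
        rw [ENNReal.toReal_mul, ENNReal.toReal_ofReal (norm_nonneg h), Lp.norm_def]

def mulL (h : C(Circ, ℂ)) : Hsp →L[ℂ] Hsp :=
  LinearMap.mkContinuous (mulLin h) ‖h‖ (mulLin_norm_le h)

lemma coeFn_mulL (h : C(Circ, ℂ)) (F : Hsp) : ⇑(mulL h F) =ᵐ[μT] fun x => h x * F x :=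
  MemLp.coeFn_toLp (memℒp_mul h F)

lemma norm_mulL_le (h : C(Circ, ℂ)) : ‖mulL h‖ ≤ ‖h‖ :=
  LinearMap.mkContinuous_norm_le _ (norm_nonneg h) _


lemma mulL_comp (h₁ h₂ : C(Circ, ℂ)) : mulL (h₁ * h₂) = (mulL h₁).comp (mulL h₂) := by
  ext F
  filter_upwards [coeFn_mulL (h₁ * h₂) F, coeFn_mulL h₁ (mulL h₂ F),
    coeFn_mulL h₂ F] with x e1 e2 e3
  rw [ContinuousLinearMap.comp_apply, e1, e2, e3, ContinuousMap.mul_apply]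
  ring

lemma mulL_one : mulL (1 : C(Circ, ℂ)) = ContinuousLinearMap.id ℂ Hsp := by
  ext F
  filter_upwards [coeFn_mulL 1 F] with x e1
  rw [e1, ContinuousMap.one_apply, one_mul, ContinuousLinearMap.id_apply]

lemma mulL_add (h₁ h₂ : C(Circ, ℂ)) : mulL (h₁ + h₂) = mulL h₁ + mulL h₂ := by
  ext F
  filter_upwards [coeFn_mulL (h₁ + h₂) F, coeFn_mulL h₁ F, coeFn_mulL h₂ F,
    Lp.coeFn_add (mulL h₁ F) (mulL h₂ F)] with x e1 e2 e3 e4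
  rw [ContinuousLinearMap.add_apply, e1, e4, Pi.add_apply, e2, e3, ContinuousMap.add_apply]
  ring

lemma mulL_smul (c : ℂ) (h : C(Circ, ℂ)) : mulL (c • h) = c • mulL h := by
  ext F
  filter_upwards [coeFn_mulL (c • h) F, coeFn_mulL h F,
    Lp.coeFn_smul c (mulL h F)] with x e1 e2 e3
  rw [ContinuousLinearMap.smul_apply, e1, e3, Pi.smul_apply, e2, ContinuousMap.smul_apply]
  simp [smul_eq_mul]; ring

lemma mulL_zero : mulL (0 : C(Circ, ℂ)) = 0 := by
  ext F
  filter_upwards [coeFn_mulL 0 F, Lp.coeFn_zero (E := ℂ) (p := 2) (μ := μT)] with x e1 e2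
  rw [e1, (rfl : (0 : Hsp →L[ℂ] Hsp) F = 0)]
  simp [e2]

/-- The Fourier transform unitary. -/
def U : Hsp ≃ₗᵢ[ℂ] ell := fourierBasis.repr

def Uc : Hsp →L[ℂ] ell := U.toLinearIsometry.toContinuousLinearMap

def Uc' : ell →L[ℂ] Hsp := U.symm.toLinearIsometry.toContinuousLinearMap

/-- The operator on `ℓ²(ℤ)` conjugate to multiplication by `h`. -/
def Aop (h : C(Circ, ℂ)) : ell →L[ℂ] ell := (Uc.comp (mulL h)).comp Uc'

lemma Aop_apply (h : C(Circ, ℂ)) (v : ell) : Aop h v = U (mulL h (U.symm v)) := rfl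

lemma Aop_mul (h₁ h₂ : C(Circ, ℂ)) : Aop (h₁ * h₂) = Aop h₁ * Aop h₂ := by
  ext v
  rw [ContinuousLinearMap.mul_apply, Aop_apply, Aop_apply, Aop_apply, mulL_comp,
    ContinuousLinearMap.comp_apply, LinearIsometryEquiv.symm_apply_apply]

lemma Aop_one : Aop (1 : C(Circ, ℂ)) = 1 := by
  ext v
  rw [Aop_apply, mulL_one, ContinuousLinearMap.id_apply, LinearIsometryEquiv.apply_symm_apply,
    ContinuousLinearMap.one_apply]

lemma Aop_add (h₁ h₂ : C(Circ, ℂ)) : Aop (h₁ + h₂) = Aop h₁ + Aop h₂ := by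
  ext v
  rw [ContinuousLinearMap.add_apply, Aop_apply, Aop_apply, Aop_apply, mulL_add,
    ContinuousLinearMap.add_apply, map_add]

lemma Aop_smul (c : ℂ) (h : C(Circ, ℂ)) : Aop (c • h) = c • Aop h := by
  ext v
  rw [ContinuousLinearMap.smul_apply, Aop_apply, Aop_apply, mulL_smul,
    ContinuousLinearMap.smul_apply, _root_.map_smul]

lemma Aop_zero : Aop (0 : C(Circ, ℂ)) = 0 := by
  ext v
  rw [Aop_apply, mulL_zero, ContinuousLinearMap.zero_apply, map_zero,
    ContinuousLinearMap.zero_apply]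

lemma norm_Aop_le (h : C(Circ, ℂ)) : ‖Aop h‖ ≤ ‖h‖ := by
  have h1 : ‖Uc‖ ≤ 1 := U.toLinearIsometry.norm_toContinuousLinearMap_le
  have h2 : ‖Uc'‖ ≤ 1 := U.symm.toLinearIsometry.norm_toContinuousLinearMap_le
  have h3 : ‖mulL h‖ ≤ ‖h‖ := norm_mulL_le h
  calc ‖(Uc.comp (mulL h)).comp Uc'‖ ≤ ‖Uc.comp (mulL h)‖ * ‖Uc'‖ :=
        ContinuousLinearMap.opNorm_comp_le _ _
    _ ≤ (‖Uc‖ * ‖mulL h‖) * ‖Uc'‖ := by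
        gcongr; exact ContinuousLinearMap.opNorm_comp_le _ _
    _ ≤ (1 * ‖h‖) * 1 := by
        gcongr <;> assumption
    _ = ‖h‖ := by ring

lemma fourierCoeff_congr_ae {G₁ G₂ : Circ → ℂ} (hG : G₁ =ᵐ[μT] G₂) (m : ℤ) :
    fourierCoeff G₁ m = fourierCoeff G₂ m := by
  simp only [fourierCoeff]
  refine integral_congr_ae ?_
  filter_upwards [hG] with x hx
  rw [hx]

lemma fourierCoeff_fourier_mul (G : Circ → ℂ) (j m : ℤ) :
    fourierCoeff (fun x => fourier j x * G x) m = fourierCoeff G (m - j) := by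
  simp only [fourierCoeff, smul_eq_mul]
  congr 1
  funext x
  rw [← mul_assoc, ← fourier_add, show -m + j = -(m - j) by ring]

lemma Aop_apply_coord (h : C(Circ, ℂ)) (v : ell) (m : ℤ) :
    Aop h v m = fourierCoeff (fun x => h x * (U.symm v : Circ → ℂ) x) m := by
  have h0 : Aop h v = fourierBasis.repr (mulL h (U.symm v)) := rfl
  rw [h0, fourierBasis_repr]
  exact fourierCoeff_congr_ae (coeFn_mulL h (U.symm v)) m

lemma Aop_single (h : C(Circ, ℂ)) (k m : ℤ) :
    Aop h (lp.single 2 k 1) m = fourierCoeff (⇑h) (m - k) := by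
  rw [Aop_apply_coord]
  have h1 : (U.symm (lp.single 2 k 1) : Hsp) = fourierLp 2 k :=
    (fourierBasis.repr_symm_single k).trans (congrFun coe_fourierBasis k)
  have h3 : (fun x => h x * (U.symm (lp.single 2 k 1) : Circ → ℂ) x)
      =ᵐ[μT] fun x => fourier k x * h x := by
    rw [h1]
    filter_upwards [coeFn_fourierLp 2 k] with x hx
    rw [hx]; ring
  rw [fourierCoeff_congr_ae h3, fourierCoeff_fourier_mul]

lemma Aop_fourier_coord (n : ℤ) (v : ell) (m : ℤ) :
    Aop (fourier n) v m = v (m - n) := by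
  rw [Aop_apply_coord, fourierCoeff_fourier_mul, ← fourierBasis_repr]
  have : fourierBasis.repr (U.symm v) = v := U.apply_symm_apply v
  rw [this]


theorem isCompactOperator_of_mem_span_finite {E F : Type*} [NormedAddCommGroup E]
    [NormedSpace ℂ E] [NormedAddCommGroup F] [NormedSpace ℂ F] (K : E →L[ℂ] F) {s : Set F}
    (hs : s.Finite) (hr : ∀ x, K x ∈ Submodule.span ℂ s) : IsCompactOperator ⇑K := by
  let V := Submodule.span ℂ s
  haveI : FiniteDimensional ℂ V := FiniteDimensional.span_of_finite ℂ hs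
  let S : E →L[ℂ] V := K.codRestrict V hr
  have hS : IsCompactOperator ⇑S := by
    have h1 : IsCompactOperator ⇑(S.toLinearMap) := by
      rw [isCompactOperator_iff_isCompact_closure_image_ball S.toLinearMap one_pos]
      exact (S.lipschitz.isBounded_image Metric.isBounded_ball).isCompact_closure
    exact h1
  have hKS : ⇑K = ⇑(V.subtypeL) ∘ ⇑S := rfl
  rw [hKS]
  exact hS.clm_comp V.subtypeL

def lpCoeHom : ell →+ (ℤ → ℂ) :=
  AddMonoidHom.mk' (fun u => ⇑u) lp.coeFn_add

lemma coeFn_sum (sfin : Finset ℤ) (F : ℤ → ell) :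
    ⇑(∑ m ∈ sfin, F m) = ∑ m ∈ sfin, ⇑(F m) :=
  map_sum lpCoeHom F sfin

lemma single_apply' (m j : ℤ) : (lp.single (E := fun _ : ℤ => ℂ) 2 m 1) j = if j = m then 1 else 0 := by
  rcases eq_or_ne j m with rfl | hne
  · rw [lp.single_apply_self, if_pos rfl]
  · rw [lp.single_apply_ne 2 m _ hne, if_neg hne]

section WithP

variable (P : ell →L[ℂ] ell)

lemma hankel_coord
    (hP : ∀ u : lp (fun _ : ℤ => ℂ) 2, ∀ m : ℤ, P u m = if 0 ≤ m then u m else 0)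
    (n : ℤ) (u : ell) (m : ℤ) :
    ((1 - P) * Aop (fourier n) * P) u m =
      if 0 ≤ m then 0 else (if 0 ≤ m - n then u (m - n) else 0) := by
  have e0 : ((1 - P) * Aop (fourier n) * P) u = (1 - P) ((Aop (fourier n)) (P u)) := rfl
  have e1 : ((1 - P) ((Aop (fourier n)) (P u))) =
      (Aop (fourier n)) (P u) - P ((Aop (fourier n)) (P u)) := by
    rw [ContinuousLinearMap.sub_apply, ContinuousLinearMap.one_apply]
  rw [e0, e1]
  have e2 : ((Aop (fourier n)) (P u) - P ((Aop (fourier n)) (P u))) m =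
      (Aop (fourier n)) (P u) m - P ((Aop (fourier n)) (P u)) m := by
    rw [lp.coeFn_sub, Pi.sub_apply]
  rw [e2, hP, Aop_fourier_coord, hP]
  rcases le_or_gt 0 m with hm | hm
  · rw [if_pos hm, if_pos hm, sub_self]
  · rw [if_neg (not_le.mpr hm), if_neg (not_le.mpr hm), sub_zero]

lemma hankel_fourier_compact
    (hP : ∀ u : lp (fun _ : ℤ => ℂ) 2, ∀ m : ℤ, P u m = if 0 ≤ m then u m else 0)
    (n : ℤ) :
    IsCompactOperator ⇑((1 - P) * Aop (fourier n) * P) := by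
  refine isCompactOperator_of_mem_span_finite _
    (Set.Finite.image (fun m => lp.single 2 m (1 : ℂ)) (Set.finite_Ico n 0)) (fun u => ?_)
  have key : ((1 - P) * Aop (fourier n) * P) u =
      ∑ m ∈ Finset.Ico n 0, (((1 - P) * Aop (fourier n) * P) u m) • lp.single 2 m (1 : ℂ) := by
    apply lp.ext
    funext j
    rw [coeFn_sum, Finset.sum_apply]
    simp only [lp.coeFn_smul, Pi.smul_apply, single_apply', smul_eq_mul, mul_ite, mul_one,
      mul_zero]
    rw [Finset.sum_ite_eq]
    by_cases hj : j ∈ Finset.Ico n 0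
    · rw [if_pos hj]
    · rw [if_neg hj]
      rw [Finset.mem_Ico, not_and_or] at hj
      rw [hankel_coord P hP]
      rcases hj with hj | hj
      · by_cases h0 : 0 ≤ j
        · rw [if_pos h0]
        · rw [if_neg h0, if_neg (by omega)]
      · rw [if_pos (by omega)]
  rw [key]
  refine Submodule.sum_mem _ fun m hm => Submodule.smul_mem _ _ (Submodule.subset_span ?_)
  exact ⟨m, by simpa using hm, rfl⟩

set_option maxHeartbeats 1000000 in
lemma hankel_compact
    (hP : ∀ u : lp (fun _ : ℤ => ℂ) 2, ∀ m : ℤ, P u m = if 0 ≤ m then u m else 0)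
    (h : C(Circ, ℂ)) :
    IsCompactOperator ⇑((1 - P) * Aop h * P) := by
  -- first: all trigonometric polynomials
  have hspan : ∀ q ∈ Submodule.span ℂ (Set.range (@fourier (2 * Real.pi))),
      IsCompactOperator ⇑((1 - P) * Aop q * P) := by
    intro q hq
    induction hq using Submodule.span_induction with
    | mem x hx =>
        obtain ⟨n, rfl⟩ := hx
        exact hankel_fourier_compact P hP n
    | zero =>
        rw [Aop_zero, mul_zero, zero_mul]
        exact isCompactOperator_zero
    | add x y _ _ hx hy =>
        have : (1 - P) * Aop (x + y) * P = (1 - P) * Aop x * P + (1 - P) * Aop y * P := by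
          rw [Aop_add]; noncomm_ring
        rw [this]
        exact hx.add hy
    | smul c x _ hx =>
        have : (1 - P) * Aop (c • x) * P = c • ((1 - P) * Aop x * P) := by
          rw [Aop_smul]
          rw [mul_smul_comm, smul_mul_assoc]
        rw [this]
        exact hx.smul c
  -- density of trigonometric polynomials
  have hdense : h ∈ closure (Submodule.span ℂ (Set.range (@fourier (2 * Real.pi))) : Set _) := by
    have := span_fourier_closure_eq_top (T := 2 * Real.pi)
    have h2 : h ∈ (Submodule.span ℂ
        (Set.range (@fourier (2 * Real.pi)))).topologicalClosure := by
      rw [this]; trivial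
    exact h2
  obtain ⟨p, hp, hlim⟩ := mem_closure_iff_seq_limit.mp hdense
  refine isCompactOperator_of_tendsto (l := Filter.atTop)
    (F := fun i => (1 - P) * Aop (p i) * P) ?_ (Filter.Eventually.of_forall fun i => hspan _ (hp i))
  -- operator norm convergence
  have hbound : ∀ q : C(Circ, ℂ),
      ‖(1 - P) * Aop q * P - (1 - P) * Aop h * P‖ ≤ (‖(1 - P)‖ * ‖P‖) * ‖q - h‖ := by
    intro q
    have e1 : (1 - P) * Aop q * P - (1 - P) * Aop h * P = (1 - P) * Aop (q - h) * P := by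
      have : Aop (q - h) = Aop q - Aop h := by
        have := Aop_add (q - h) h
        rw [sub_add_cancel] at this
        rw [this]; noncomm_ring
      rw [this]; noncomm_ring
    rw [e1]
    calc ‖(1 - P) * Aop (q - h) * P‖ ≤ ‖(1 - P) * Aop (q - h)‖ * ‖P‖ :=
          ContinuousLinearMap.opNorm_comp_le _ _
      _ ≤ (‖(1 - P)‖ * ‖Aop (q - h)‖) * ‖P‖ := by
          gcongr
          exact ContinuousLinearMap.opNorm_comp_le _ _
      _ ≤ (‖(1 - P)‖ * ‖q - h‖) * ‖P‖ := by
          gcongr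
          · exact norm_Aop_le _
      _ = (‖(1 - P)‖ * ‖P‖) * ‖q - h‖ := by ring
  rw [Metric.tendsto_atTop] at hlim ⊢
  intro ε hε
  have hC : (0:ℝ) ≤ ‖(1 - P)‖ * ‖P‖ := by positivity
  have hC1 : (0:ℝ) < ‖(1 - P)‖ * ‖P‖ + 1 := by positivity
  obtain ⟨N, hN⟩ := hlim (ε / (‖(1 - P)‖ * ‖P‖ + 1)) (by positivity)
  refine ⟨N, fun i hi => ?_⟩
  have hd : ‖p i - h‖ < ε / (‖(1 - P)‖ * ‖P‖ + 1) := by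
    rw [← dist_eq_norm]; exact hN i hi
  have h3 : ‖p i - h‖ * (‖(1 - P)‖ * ‖P‖ + 1) < ε := (lt_div_iff₀ hC1).mp hd
  calc dist ((1 - P) * Aop (p i) * P) ((1 - P) * Aop h * P)
      = ‖(1 - P) * Aop (p i) * P - (1 - P) * Aop h * P‖ := dist_eq_norm _ _
    _ ≤ (‖(1 - P)‖ * ‖P‖) * ‖p i - h‖ := hbound (p i)
    _ < ε := by nlinarith [norm_nonneg (p i - h)]

end WithP

lemma coe_circle_mem_sphere (z : Circle) : (z : ℂ) ∈ sphere (0 : ℂ) 1 := by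
  rw [mem_sphere_zero_iff_norm, Circle.norm_coe]

/-- The symbol on the additive circle induced by a function on the unit circle in `ℂ`. -/
def symb (f : ℂ → ℂ) (hf : ContinuousOn f (sphere 0 1)) : C(Circ, ℂ) where
  toFun x := f (AddCircle.toCircle x)
  continuous_toFun := by
    refine hf.comp_continuous ?_ fun x => coe_circle_mem_sphere _
    exact continuous_induced_dom.comp AddCircle.continuous_toCircle

lemma toCircle_coe_real (x : ℝ) :
    ((AddCircle.toCircle (x : Circ) : Circle) : ℂ) = Complex.exp (x * Complex.I) := by
  rw [AddCircle.toCircle_apply_mk, div_self Real.two_pi_pos.ne', one_mul, Circle.coe_exp]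

lemma circleFourierCoeff_eq (f : ℂ → ℂ) (hf : ContinuousOn f (sphere 0 1)) (j : ℤ) :
    circleFourierCoeff f j = fourierCoeff (⇑(symb f hf)) j := by
  rw [fourierCoeff_eq_intervalIntegral _ j 0, zero_add, circleFourierCoeff]
  have hint : (∫ θ in (0:ℝ)..(2 * Real.pi),
        f (Complex.exp (θ * Complex.I)) * Complex.exp (-((j:ℂ) * (θ:ℂ)) * Complex.I))
      = ∫ x in (0:ℝ)..(2 * Real.pi), (fourier (-j) (x : Circ) : ℂ) • symb f hf (x : Circ) := by
    refine intervalIntegral.integral_congr fun x _ => ?_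
    have h1 : symb f hf (x : Circ) = f (Complex.exp (x * Complex.I)) := by
      show f _ = _
      rw [toCircle_coe_real]
    have h2 : (fourier (-j) (x : Circ) : ℂ) = Complex.exp (-((j:ℂ) * (x:ℂ)) * Complex.I) := by
      rw [fourier_coe_apply]
      congr 1
      have hpi : (Real.pi : ℂ) ≠ 0 := Complex.ofReal_ne_zero.mpr Real.pi_ne_zero
      push_cast
      field_simp
    rw [h1, h2, smul_eq_mul, mul_comm]
  rw [hint, Complex.real_smul]
  congr 1
  push_cast
  ring

lemma refl_symm_single (k : ℤ) :
    (LinearIsometryEquiv.refl ℂ (lp (fun _ : ℤ => ℂ) 2)).symm (lp.single 2 k 1) = lp.single 2 k 1 :=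
  ((LinearIsometryEquiv.refl ℂ _).symm_apply_eq).mpr rfl

lemma dense_span_single :
    Dense (↑(Submodule.span ℂ
      (Set.range fun k : ℤ => (lp.single (E := fun _ : ℤ => ℂ) 2 k 1 : ell))) : Set ell) := by
  let b : HilbertBasis ℤ ℂ ell := HilbertBasis.ofRepr (LinearIsometryEquiv.refl ℂ ell)
  have hb : (⇑b : ℤ → ell) = fun k => (lp.single (E := fun _ : ℤ => ℂ) 2 k 1 : ell) := by
    funext k
    exact (b.repr_symm_single k).symm.trans (refl_symm_single k)
  have hd := b.dense_span
  rw [hb] at hd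
  exact Submodule.dense_iff_topologicalClosure_eq_top.mpr hd

set_option synthInstance.maxHeartbeats 1000000 in
lemma M_eq (f : ℂ → ℂ) (hf : ContinuousOn f (sphere 0 1)) (M : ell →L[ℂ] ell)
    (hM : ∀ u : lp (fun _ : ℤ => ℂ) 2, ∀ m : ℤ,
      M u m = ∑' k : ℤ, circleFourierCoeff f (m - k) * u k) :
    M = Aop (symb f hf) := by
  refine ContinuousLinearMap.ext_on dense_span_single ?_
  rintro x ⟨k, rfl⟩
  apply lp.ext
  funext m
  have e1 : M (lp.single (E := fun _ : ℤ => ℂ) 2 k 1) m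
      = circleFourierCoeff f (m - k) := by
    rw [hM]
    rw [tsum_eq_single k (fun j hj => by rw [lp.single_apply_ne 2 k _ hj, mul_zero])]
    rw [lp.single_apply_self, mul_one]
  rw [e1, Aop_single, ← circleFourierCoeff_eq f hf]

lemma P_idem (P : ell →L[ℂ] ell)
    (hP : ∀ u : lp (fun _ : ℤ => ℂ) 2, ∀ m : ℤ, P u m = if 0 ≤ m then u m else 0) :
    P * P = P := by
  ext u m
  have e0 : (P * P) u = P (P u) := rfl
  rw [e0, hP (P u) m, hP u m]
  by_cases hm : 0 ≤ m
  · simp [hm]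
  · simp [hm]

lemma toeplitz_key (P : ell →L[ℂ] ell) (hPP : P * P = P) (X Y : ell →L[ℂ] ell) :
    P * (X * Y) * P - (P * X * P) * (P * Y * P) = (P * X) * ((1 - P) * Y * P) := by
  have e : (P * X * P) * (P * Y * P) = P * X * ((P * P) * (Y * P)) := by noncomm_ring
  rw [e, hPP]
  noncomm_ring

end

end ToeplitzProof

set_option maxHeartbeats 2000000 in
open ToeplitzProof in
/-- Semicommutator compactness for Toeplitz operators.  We work on `H = l²(ℤ)`, with `P`
the orthogonal projection onto `l²(ℤ≥0)` and `M_f` the multiplication operator (the Fourier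
transform of multiplication by `f` on `L²(𝕋)`), characterized by its matrix of Fourier
coefficients.  For continuous `f, g` on the unit circle the semicommutator
`T_{fg} − T_f T_g = P M_{fg} P − (P M_f P)(P M_g P)` is compact; in particular, if `f` is
nowhere vanishing on the circle, the Toeplitz operator `T_f = P M_f P` is Fredholm (it has
a parametrix supported on `l²(ℤ≥0)` inverting it there modulo compacts). -/
theorem toeplitz_semicommutator_compact
    (f g : ℂ → ℂ)
    (hf : ContinuousOn f (sphere 0 1)) (hg : ContinuousOn g (sphere 0 1))
    (P Mf Mg Mfg : lp (fun _ : ℤ => ℂ) 2 →L[ℂ] lp (fun _ : ℤ => ℂ) 2)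
    (hP : ∀ u : lp (fun _ : ℤ => ℂ) 2, ∀ m : ℤ, P u m = if 0 ≤ m then u m else 0)
    (hMf : ∀ u : lp (fun _ : ℤ => ℂ) 2, ∀ m : ℤ,
      Mf u m = ∑' k : ℤ, circleFourierCoeff f (m - k) * u k)
    (hMg : ∀ u : lp (fun _ : ℤ => ℂ) 2, ∀ m : ℤ,
      Mg u m = ∑' k : ℤ, circleFourierCoeff g (m - k) * u k)
    (hMfg : ∀ u : lp (fun _ : ℤ => ℂ) 2, ∀ m : ℤ,
      Mfg u m = ∑' k : ℤ, circleFourierCoeff (fun z => f z * g z) (m - k) * u k) :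
    IsCompactOperator ⇑(P * Mfg * P - (P * Mf * P) * (P * Mg * P)) ∧
    ((∀ z ∈ sphere (0 : ℂ) 1, f z ≠ 0) →
      ∃ Q : lp (fun _ : ℤ => ℂ) 2 →L[ℂ] lp (fun _ : ℤ => ℂ) 2,
        P * Q * P = Q ∧
        IsCompactOperator ⇑(Q * (P * Mf * P) - P) ∧
        IsCompactOperator ⇑((P * Mf * P) * Q - P)) := by
  classical
  have hMf' : Mf = Aop (symb f hf) := M_eq f hf Mf hMf
  have hMg' : Mg = Aop (symb g hg) := M_eq g hg Mg hMg
  have hfg : ContinuousOn (fun z => f z * g z) (sphere 0 1) := hf.mul hg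
  have hMfg' : Mfg = Aop (symb f hf * symb g hg) := by
    have h1 := M_eq _ hfg Mfg hMfg
    have h2 : symb (fun z => f z * g z) hfg = symb f hf * symb g hg := by
      ext x; rfl
    rw [h1, h2]
  have hPP : P * P = P := P_idem P hP
  constructor
  · rw [hMf', hMg', hMfg', Aop_mul]
    rw [toeplitz_key P hPP (Aop (symb f hf)) (Aop (symb g hg))]
    exact (hankel_compact P hP (symb g hg)).clm_comp (P * Aop (symb f hf))
  · intro hfne
    set sf := symb f hf with hsf
    have hne : ∀ x : Circ, sf x ≠ 0 := fun x => hfne _ (coe_circle_mem_sphere _)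
    let si : C(Circ, ℂ) := ⟨fun x => (sf x)⁻¹, sf.continuous.inv₀ hne⟩
    have hsi1 : si * sf = 1 := ContinuousMap.ext fun x => inv_mul_cancel₀ (hne x)
    have hsi2 : sf * si = 1 := ContinuousMap.ext fun x => mul_inv_cancel₀ (hne x)
    refine ⟨P * Aop si * P, ?_, ?_, ?_⟩
    · calc P * (P * Aop si * P) * P = (P * P) * Aop si * (P * P) := by noncomm_ring
        _ = P * Aop si * P := by rw [hPP]
    · rw [hMf']
      have key := toeplitz_key P hPP (Aop si) (Aop sf)
      have hone : P * (Aop si * Aop sf) * P = P := by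
        rw [← Aop_mul, hsi1, Aop_one, mul_one, hPP]
      rw [hone] at key
      have e2 : (P * Aop si * P) * (P * Aop sf * P) - P
          = -((P * Aop si) * ((1 - P) * Aop sf * P)) := by
        rw [← key]; abel
      rw [e2]
      have hc := (hankel_compact P hP sf).clm_comp (P * Aop si)
      have e3 : ⇑(-((P * Aop si) * ((1 - P) * Aop sf * P)))
          = -(⇑(P * Aop si) ∘ ⇑((1 - P) * Aop sf * P)) := by
        funext u; simp [ContinuousLinearMap.mul_apply]
      rw [e3]
      exact hc.neg
    · rw [hMf']
      have key := toeplitz_key P hPP (Aop sf) (Aop si)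
      have hone : P * (Aop sf * Aop si) * P = P := by
        rw [← Aop_mul, hsi2, Aop_one, mul_one, hPP]
      rw [hone] at key
      have e2 : (P * Aop sf * P) * (P * Aop si * P) - P
          = -((P * Aop sf) * ((1 - P) * Aop si * P)) := by
        rw [← key]; abel
      rw [e2]
      have hc := (hankel_compact P hP si).clm_comp (P * Aop sf)
      have e3 : ⇑(-((P * Aop sf) * ((1 - P) * Aop si * P)))
          = -(⇑(P * Aop sf) ∘ ⇑((1 - P) * Aop si * P)) := by
        funext u; simp [ContinuousLinearMap.mul_apply]
      rw [e3]
      exact hc.neg
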